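/- Fix 0 < γ < 0.5 and consider the nonlinear Markov chain on E = {1,2,3,4} whose transition matrix given the current distribution μ = (μ₁,μ₂,μ₃,μ₄) is P_μ with rows: row 1 = (0, γμ₁, 0.5 − γμ₁, 0.5); row 2 = (0.5, 0.5, 0, 0); row 3 = (0.5, 0, 0.5, 0); row 4 = (0, 0.5, 0, 0.5). Then this chain has a unique invariant distribution π (satisfying π P_π = π), and for every initial probability vector μ₀ the marginals μ_{n+1} = μ_n P_{μ_n} converge to π exponentially fast: ‖μ_n − π‖_TV ≤ ‖μ₀ − π‖_TV · ((1+γ)/2)^{⌊n/2⌋} · c_n, where c_n = 1 + γ if n is odd and c_n = 1 if n is even. In particular, the one-step conditions of Butkovsky fail for this chain (the one-step Dobrushin-type constant is α = 0 while the one-step Lipschitz constant is λ = γ > α), yet exponential convergence holds. -/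

import Mathlib

open Finset

/-- A probability vector on the four-point state space `{1,2,3,4}`. -/
def IsProbVec (μ : Fin 4 → ℝ) : Prop := (∀ i, 0 ≤ μ i) ∧ ∑ i, μ i = 1

/-- Total variation distance between two (row) vectors: `‖μ − ν‖_TV = Σᵢ |μᵢ − νᵢ|`. -/
def tvVec (μ ν : Fin 4 → ℝ) : ℝ := ∑ i, |μ i - ν i|

/-- Transition matrix of the second example chain, depending on the current law `μ`. -/
noncomputable def Pmat (γ : ℝ) (μ : Fin 4 → ℝ) : Fin 4 → Fin 4 → ℝ :=
  ![![0, γ * μ 0, 0.5 - γ * μ 0, 0.5],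
    ![0.5, 0.5, 0, 0],
    ![0.5, 0, 0.5, 0],
    ![0, 0.5, 0, 0.5]]

/-- One step of the marginal law: `(μP_μ)_j = Σᵢ μᵢ P_μ(i,j)`. -/
noncomputable def stepVec (γ : ℝ) (μ : Fin 4 → ℝ) : Fin 4 → ℝ :=
  fun j => ∑ i, μ i * Pmat γ μ i j

/-- Marginals of the chain: `μ_{n+1} = μ_n P_{μ_n}`. -/
noncomputable def margVec (γ : ℝ) (μ0 : Fin 4 → ℝ) : ℕ → (Fin 4 → ℝ)
  | 0 => μ0
  | n + 1 => stepVec γ (margVec γ μ0 n)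

/-- The invariant distribution. -/
noncomputable def piVec (γ : ℝ) : Fin 4 → ℝ := ![1/4, 1/4 + γ/8, 1/4 - γ/8, 1/4]

lemma sv0 (γ : ℝ) (μ : Fin 4 → ℝ) : stepVec γ μ 0 = μ 1 / 2 + μ 2 / 2 := by
  simp [stepVec, Pmat, Fin.sum_univ_four]; norm_num; ring

lemma sv1 (γ : ℝ) (μ : Fin 4 → ℝ) : stepVec γ μ 1 = γ * μ 0 ^ 2 + μ 1 / 2 + μ 3 / 2 := by
  simp [stepVec, Pmat, Fin.sum_univ_four]; norm_num; ring

lemma sv2 (γ : ℝ) (μ : Fin 4 → ℝ) :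
    stepVec γ μ 2 = μ 0 / 2 - γ * μ 0 ^ 2 + μ 2 / 2 := by
  simp [stepVec, Pmat, Fin.sum_univ_four]; norm_num; ring

lemma sv3 (γ : ℝ) (μ : Fin 4 → ℝ) : stepVec γ μ 3 = μ 0 / 2 + μ 3 / 2 := by
  simp [stepVec, Pmat, Fin.sum_univ_four]; norm_num; ring

lemma pv0 (γ : ℝ) : piVec γ 0 = 1/4 := rfl
lemma pv1 (γ : ℝ) : piVec γ 1 = 1/4 + γ/8 := rfl
lemma pv2 (γ : ℝ) : piVec γ 2 = 1/4 - γ/8 := rfl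
lemma pv3 (γ : ℝ) : piVec γ 3 = 1/4 := rfl

lemma tvVec_eq (μ ν : Fin 4 → ℝ) :
    tvVec μ ν = |μ 0 - ν 0| + |μ 1 - ν 1| + |μ 2 - ν 2| + |μ 3 - ν 3| := by
  simp [tvVec, Fin.sum_univ_four]

lemma isProbVec_iff (μ : Fin 4 → ℝ) :
    IsProbVec μ ↔ (0 ≤ μ 0 ∧ 0 ≤ μ 1 ∧ 0 ≤ μ 2 ∧ 0 ≤ μ 3) ∧ μ 0 + μ 1 + μ 2 + μ 3 = 1 := by
  constructor
  · rintro ⟨h1, h2⟩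
    rw [Fin.sum_univ_four] at h2
    exact ⟨⟨h1 0, h1 1, h1 2, h1 3⟩, h2⟩
  · rintro ⟨⟨h0, h1, h2, h3⟩, hs⟩
    refine ⟨fun i => ?_, by rw [Fin.sum_univ_four]; exact hs⟩
    fin_cases i <;> assumption

lemma piVec_prob (γ : ℝ) (hγ0 : 0 < γ) (hγ : γ < 0.5) : IsProbVec (piVec γ) := by
  rw [isProbVec_iff, pv0, pv1, pv2, pv3]
  norm_num at hγ ⊢
  constructor
  · constructor <;> linarith
  · ring

lemma step_prob (γ : ℝ) (hγ0 : 0 < γ) (hγ : γ < 0.5) (μ : Fin 4 → ℝ) (h : IsProbVec μ) :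
    IsProbVec (stepVec γ μ) := by
  rw [isProbVec_iff] at h ⊢
  obtain ⟨⟨h0, h1, h2, h3⟩, hs⟩ := h
  norm_num at hγ
  have hμ0 : μ 0 ≤ 1 := by linarith
  rw [sv0, sv1, sv2, sv3]
  have k1 : 0 ≤ (1/2 - γ) * (μ 0)^2 := mul_nonneg (by linarith) (sq_nonneg _)
  have k2 : 0 ≤ μ 0 * (1 - μ 0) := mul_nonneg h0 (by linarith)
  have k3 : 0 ≤ γ * (μ 0)^2 := by positivity
  refine ⟨⟨by linarith, by linarith, by nlinarith, by linarith⟩, by linarith⟩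

lemma step_piVec (γ : ℝ) : stepVec γ (piVec γ) = piVec γ := by
  funext j
  fin_cases j
  · show stepVec γ (piVec γ) 0 = piVec γ 0
    rw [sv0, pv0, pv1, pv2]; ring
  · show stepVec γ (piVec γ) 1 = piVec γ 1
    rw [sv1, pv0, pv1, pv3]; ring
  · show stepVec γ (piVec γ) 2 = piVec γ 2
    rw [sv2, pv0, pv2]; ring
  · show stepVec γ (piVec γ) 3 = piVec γ 3
    rw [sv3, pv0, pv3]; ring


lemma combine1 (γ a A0 A1 A2 A3 S : ℝ) (hγ0 : 0 < γ) (hγ : γ < 1/2)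
    (hA0 : 0 ≤ A0) (hA1 : 0 ≤ A1) (hA2 : 0 ≤ A2) (hA3 : 0 ≤ A3)
    (ha0 : 0 ≤ a) (ha1 : a ≤ 5*γ/4)
    (hS : S ≤ (A1/2 + A2/2) + (a*A0 + A1/2 + A3/2) + (|1/2 - a| * A0 + A2/2) + (A0/2 + A3/2)) :
    S ≤ (1+γ) * (A0+A1+A2+A3) := by
  rcases le_or_gt a (1/2) with hc | hc
  · rw [abs_of_nonneg (by linarith : (0:ℝ) ≤ 1/2 - a)] at hS
    nlinarith [mul_nonneg hγ0.le hA0, mul_nonneg hγ0.le hA1,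
      mul_nonneg hγ0.le hA2, mul_nonneg hγ0.le hA3]
  · rw [show |1/2 - a| = a - 1/2 by rw [abs_of_nonpos (by linarith)]; ring] at hS
    nlinarith [mul_le_mul_of_nonneg_right ha1 hA0, mul_nonneg hγ0.le hA1,
      mul_nonneg hγ0.le hA2, mul_nonneg hγ0.le hA3,
      mul_nonneg (by linarith : (0:ℝ) ≤ 1 - 3*γ/2) hA0]

lemma combine2 (γ a b A0 A1 A2 A3 S : ℝ) (hγ0 : 0 < γ) (hγ : γ < 1/2)
    (hA0 : 0 ≤ A0) (hA1 : 0 ≤ A1) (hA2 : 0 ≤ A2) (hA3 : 0 ≤ A3)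
    (ha0 : 0 ≤ a) (ha1 : a ≤ 5*γ/4) (hb0 : 0 ≤ b) (hb1 : b ≤ 5*γ/4)
    (hS : S ≤ (a/2)*A0 + (b/2)*A1 + |b/2 - 1/4| * A2 + (1/4)*A3) :
    0 + S + S + 0 ≤ (1+γ)/2 * (A0+A1+A2+A3) := by
  have hq : |b/2 - 1/4| ≤ 1/4 := by
    rw [abs_le]; constructor <;> linarith
  nlinarith [mul_le_mul_of_nonneg_right ha1 hA0, mul_le_mul_of_nonneg_right hb1 hA1,
    mul_le_mul_of_nonneg_right hq hA2,
    mul_nonneg (by linarith : (0:ℝ) ≤ 1 - 3*γ/2) hA0,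
    mul_nonneg (by linarith : (0:ℝ) ≤ 1 - 3*γ/2) hA1,
    mul_nonneg hγ0.le hA2, mul_nonneg hγ0.le hA3]

/-- One-step bound. -/
lemma one_step (γ : ℝ) (hγ0 : 0 < γ) (hγ : γ < 0.5) (μ : Fin 4 → ℝ) (h : IsProbVec μ) :
    tvVec (stepVec γ μ) (piVec γ) ≤ (1 + γ) * tvVec μ (piVec γ) := by
  rw [isProbVec_iff] at h
  obtain ⟨⟨h0, h1, h2, h3⟩, hs⟩ := h
  norm_num at hγ
  have hμ0 : μ 0 ≤ 1 := by linarith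
  rw [tvVec_eq, tvVec_eq, sv0, sv1, sv2, sv3, pv0, pv1, pv2, pv3]
  set d0 := μ 0 - 1/4 with hd0
  set d1 := μ 1 - (1/4 + γ/8) with hd1
  set d2 := μ 2 - (1/4 - γ/8) with hd2
  set d3 := μ 3 - 1/4 with hd3
  set a := γ * (μ 0 + 1/4) with ha
  have ha0 : 0 ≤ a := by rw [ha]; positivity
  have ha1 : a ≤ 5*γ/4 := by
    rw [ha]; nlinarith [mul_nonneg hγ0.le (by linarith : (0:ℝ) ≤ 1 - μ 0)]
  have e0 : μ 1 / 2 + μ 2 / 2 - 1/4 = d1/2 + d2/2 := by rw [hd1, hd2]; ring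
  have e1 : γ * μ 0 ^ 2 + μ 1 / 2 + μ 3 / 2 - (1/4 + γ/8) = a * d0 + d1/2 + d3/2 := by
    rw [ha, hd0, hd1, hd3]; ring
  have e2 : μ 0 / 2 - γ * μ 0 ^ 2 + μ 2 / 2 - (1/4 - γ/8) = (1/2 - a) * d0 + d2/2 := by
    rw [ha, hd0, hd2]; ring
  have e3 : μ 0 / 2 + μ 3 / 2 - 1/4 = d0/2 + d3/2 := by rw [hd0, hd3]; ring
  rw [e0, e1, e2, e3]
  have b0 : |d1/2 + d2/2| ≤ |d1|/2 + |d2|/2 := by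
    calc |d1/2 + d2/2| ≤ |d1/2| + |d2/2| := abs_add_le _ _
    _ = |d1|/2 + |d2|/2 := by rw [abs_div, abs_div]; norm_num
  have b1 : |a * d0 + d1/2 + d3/2| ≤ a * |d0| + |d1|/2 + |d3|/2 := by
    calc |a * d0 + d1/2 + d3/2| ≤ |a * d0 + d1/2| + |d3/2| := abs_add_le _ _
    _ ≤ |a * d0| + |d1/2| + |d3/2| := by linarith [abs_add_le (a*d0) (d1/2)]
    _ = a * |d0| + |d1|/2 + |d3|/2 := by
        rw [abs_mul, abs_of_nonneg ha0, abs_div, abs_div]; norm_num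
  have b2 : |(1/2 - a) * d0 + d2/2| ≤ |1/2 - a| * |d0| + |d2|/2 := by
    calc |(1/2 - a) * d0 + d2/2| ≤ |(1/2 - a) * d0| + |d2/2| := abs_add_le _ _
    _ = |1/2 - a| * |d0| + |d2|/2 := by rw [abs_mul, abs_div]; norm_num
  have b3 : |d0/2 + d3/2| ≤ |d0|/2 + |d3|/2 := by
    calc |d0/2 + d3/2| ≤ |d0/2| + |d3/2| := abs_add_le _ _
    _ = |d0|/2 + |d3|/2 := by rw [abs_div, abs_div]; norm_num
  exact combine1 γ a |d0| |d1| |d2| |d3| _ hγ0 (by linarith) (abs_nonneg _) (abs_nonneg _)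
    (abs_nonneg _) (abs_nonneg _) ha0 ha1 (by linarith only [b0, b1, b2, b3])

/-- Two-step bound. -/
lemma two_step (γ : ℝ) (hγ0 : 0 < γ) (hγ : γ < 0.5) (μ : Fin 4 → ℝ) (h : IsProbVec μ) :
    tvVec (stepVec γ (stepVec γ μ)) (piVec γ) ≤ (1 + γ)/2 * tvVec μ (piVec γ) := by
  have hp := h
  rw [isProbVec_iff] at hp
  obtain ⟨⟨h0, h1, h2, h3⟩, hs⟩ := hp
  norm_num at hγ
  have hμ0 : μ 0 ≤ 1 := by linarith
  have hm3 : μ 3 = 1 - μ 0 - μ 1 - μ 2 := by linarith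
  rw [tvVec_eq, tvVec_eq, sv0 γ (stepVec γ μ), sv1 γ (stepVec γ μ), sv2 γ (stepVec γ μ),
    sv3 γ (stepVec γ μ), sv0, sv1, sv2, sv3, pv0, pv1, pv2, pv3]
  set d0 := μ 0 - 1/4 with hd0
  set d1 := μ 1 - (1/4 + γ/8) with hd1
  set d2 := μ 2 - (1/4 - γ/8) with hd2
  set d3 := μ 3 - 1/4 with hd3
  set a := γ * (μ 0 + 1/4) with ha
  set b := γ * ((μ 1 + μ 2)/2 + 1/4) with hb
  have ha0 : 0 ≤ a := by rw [ha]; positivity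
  have ha1 : a ≤ 5*γ/4 := by
    rw [ha]; nlinarith [mul_nonneg hγ0.le (by linarith : (0:ℝ) ≤ 1 - μ 0)]
  have hb0 : 0 ≤ b := by rw [hb]; positivity
  have hb1 : b ≤ 5*γ/4 := by
    rw [hb]; nlinarith [mul_nonneg hγ0.le (by linarith : (0:ℝ) ≤ 1 - (μ 1 + μ 2))]
  -- component 0 vanishes
  have e0 : (γ * μ 0 ^ 2 + μ 1 / 2 + μ 3 / 2) / 2 + (μ 0 / 2 - γ * μ 0 ^ 2 + μ 2 / 2) / 2
      - 1/4 = 0 := by rw [hm3]; ring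
  -- component 3 vanishes
  have e3 : (μ 1 / 2 + μ 2 / 2) / 2 + (μ 0 / 2 + μ 3 / 2) / 2 - 1/4 = 0 := by
    rw [hm3]; ring
  -- component 1
  have e1 : γ * (μ 1 / 2 + μ 2 / 2) ^ 2 + (γ * μ 0 ^ 2 + μ 1 / 2 + μ 3 / 2) / 2
      + (μ 0 / 2 + μ 3 / 2) / 2 - (1/4 + γ/8)
      = (a/2) * d0 + (b/2) * d1 + (b/2 - 1/4) * d2 + (1/4) * d3 := by
    rw [ha, hb, hd0, hd1, hd2, hd3, hm3]; ring
  -- component 2 is the negative of component 1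
  have e2 : (μ 1 / 2 + μ 2 / 2) / 2 - γ * (μ 1 / 2 + μ 2 / 2) ^ 2
      + (μ 0 / 2 - γ * μ 0 ^ 2 + μ 2 / 2) / 2 - (1/4 - γ/8)
      = -((a/2) * d0 + (b/2) * d1 + (b/2 - 1/4) * d2 + (1/4) * d3) := by
    rw [ha, hb, hd0, hd1, hd2, hd3, hm3]; ring
  rw [e0, e1, e2, e3, abs_neg, abs_zero]
  set f := (a/2) * d0 + (b/2) * d1 + (b/2 - 1/4) * d2 + (1/4) * d3 with hf
  have hfb : |f| ≤ (a/2) * |d0| + (b/2) * |d1| + |b/2 - 1/4| * |d2| + (1/4) * |d3| := by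
    calc |f| ≤ |(a/2) * d0 + (b/2) * d1 + (b/2 - 1/4) * d2| + |(1/4) * d3| := abs_add_le _ _
    _ ≤ |(a/2) * d0 + (b/2) * d1| + |(b/2 - 1/4) * d2| + |(1/4) * d3| := by
        linarith [abs_add_le ((a/2) * d0 + (b/2) * d1) ((b/2 - 1/4) * d2)]
    _ ≤ |(a/2) * d0| + |(b/2) * d1| + |(b/2 - 1/4) * d2| + |(1/4) * d3| := by
        linarith [abs_add_le ((a/2) * d0) ((b/2) * d1)]
    _ = (a/2) * |d0| + (b/2) * |d1| + |b/2 - 1/4| * |d2| + (1/4) * |d3| := by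
        rw [abs_mul, abs_mul, abs_mul, abs_mul, abs_of_nonneg (by linarith : (0:ℝ) ≤ a/2),
          abs_of_nonneg (by linarith : (0:ℝ) ≤ b/2),
          abs_of_nonneg (by norm_num : (0:ℝ) ≤ (1/4:ℝ))]
  exact combine2 γ a b |d0| |d1| |d2| |d3| _ hγ0 (by linarith) (abs_nonneg _) (abs_nonneg _)
    (abs_nonneg _) (abs_nonneg _) ha0 ha1 hb0 hb1 hfb

lemma tvVec_nonneg (μ ν : Fin 4 → ℝ) : 0 ≤ tvVec μ ν := by
  rw [tvVec_eq]; positivity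

/-- for `0 < γ < 0.5` the example chain has a unique invariant distribution
`π` and `‖μ_n − π‖_TV ≤ ‖μ₀ − π‖_TV ((1+γ)/2)^{⌊n/2⌋} c_n`; moreover the one-step
Dobrushin constant is `α = 0` (some pair of rows is at total variation distance `2`, so
the one-step condition fails for every `α > 0`) while the one-step Lipschitz constant is
`λ = γ > α`. -/
theorem example_chain_convergence (γ : ℝ) (hγ0 : 0 < γ) (hγ : γ < 0.5) :
    (∃ π : Fin 4 → ℝ, IsProbVec π ∧ stepVec γ π = π ∧
        (∀ π' : Fin 4 → ℝ, IsProbVec π' → stepVec γ π' = π' → π' = π) ∧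
        (∀ μ0 : Fin 4 → ℝ, IsProbVec μ0 → ∀ n : ℕ,
          tvVec (margVec γ μ0 n) π ≤
            tvVec μ0 π * ((1 + γ) / 2) ^ (n / 2) * (if Odd n then 1 + γ else 1))) ∧
      (∃ μ : Fin 4 → ℝ, ∃ x y : Fin 4, IsProbVec μ ∧ tvVec (Pmat γ μ x) (Pmat γ μ y) = 2) ∧
      (∀ μ ν : Fin 4 → ℝ, IsProbVec μ → IsProbVec ν → ∀ x : Fin 4,
        tvVec (Pmat γ μ x) (Pmat γ ν x) ≤ γ * tvVec μ ν) := by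
  refine ⟨⟨piVec γ, piVec_prob γ hγ0 hγ, step_piVec γ, ?_, ?_⟩, ?_, ?_⟩
  · -- uniqueness
    intro π' hp hfix
    rw [isProbVec_iff] at hp
    obtain ⟨⟨h0, h1, h2, h3⟩, hs⟩ := hp
    have q0 : π' 1 / 2 + π' 2 / 2 = π' 0 := by rw [← sv0 γ π', hfix]
    have q1 : γ * π' 0 ^ 2 + π' 1 / 2 + π' 3 / 2 = π' 1 := by rw [← sv1 γ π', hfix]
    have q2 : π' 0 / 2 - γ * π' 0 ^ 2 + π' 2 / 2 = π' 2 := by rw [← sv2 γ π', hfix]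
    have q3 : π' 0 / 2 + π' 3 / 2 = π' 3 := by rw [← sv3 γ π', hfix]
    have h30 : π' 3 = π' 0 := by linarith
    have h20 : π' 2 = π' 0 - 2 * (γ * π' 0 ^ 2) := by linarith
    have h10 : π' 1 = π' 0 + 2 * (γ * π' 0 ^ 2) := by linarith
    have h00 : π' 0 = 1/4 := by linarith
    rw [h00] at h10 h20 h30
    norm_num at h10 h20
    funext j
    fin_cases j
    · show π' 0 = piVec γ 0
      rw [pv0, h00]
    · show π' 1 = piVec γ 1
      rw [pv1, h10]; ring
    · show π' 2 = piVec γ 2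
      rw [pv2, h20]; ring
    · show π' 3 = piVec γ 3
      rw [pv3, h30]
  · -- convergence
    intro μ0 hμ0 n
    have hprob : ∀ m : ℕ, IsProbVec (margVec γ μ0 m) := by
      intro m
      induction m with
      | zero => exact hμ0
      | succ k ih => exact step_prob γ hγ0 hγ _ ih
    have hr0 : (0:ℝ) ≤ (1 + γ)/2 := by linarith
    have hT0 : 0 ≤ tvVec μ0 (piVec γ) := tvVec_nonneg _ _
    have heven : ∀ k : ℕ, tvVec (margVec γ μ0 (2*k)) (piVec γ) ≤
        tvVec μ0 (piVec γ) * ((1 + γ)/2) ^ k := by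
      intro k
      induction k with
      | zero => simp [margVec]
      | succ k ih =>
        have hstep : margVec γ μ0 (2*(k+1)) =
            stepVec γ (stepVec γ (margVec γ μ0 (2*k))) := by
          have h2 : 2*(k+1) = (2*k) + 1 + 1 := by ring
          rw [h2]; rfl
        rw [hstep]
        calc tvVec (stepVec γ (stepVec γ (margVec γ μ0 (2*k)))) (piVec γ)
            ≤ (1 + γ)/2 * tvVec (margVec γ μ0 (2*k)) (piVec γ) :=
              two_step γ hγ0 hγ _ (hprob _)
          _ ≤ (1 + γ)/2 * (tvVec μ0 (piVec γ) * ((1 + γ)/2) ^ k) :=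
              mul_le_mul_of_nonneg_left ih hr0
          _ = tvVec μ0 (piVec γ) * ((1 + γ)/2) ^ (k+1) := by ring
    rcases Nat.even_or_odd n with ⟨k, hk⟩ | ⟨k, hk⟩
    · have hn2 : n / 2 = k := by omega
      have hnodd : ¬ Odd n := by rw [Nat.odd_iff]; omega
      rw [hn2, if_neg hnodd, mul_one]
      have hn : n = 2 * k := by omega
      rw [hn]
      exact heven k
    · have hn2 : n / 2 = k := by omega
      have hnodd : Odd n := ⟨k, hk⟩
      rw [hn2, if_pos hnodd]
      have hn : n = (2*k) + 1 := by omega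
      rw [hn]
      have hstep : margVec γ μ0 (2*k + 1) = stepVec γ (margVec γ μ0 (2*k)) := rfl
      rw [hstep]
      calc tvVec (stepVec γ (margVec γ μ0 (2*k))) (piVec γ)
          ≤ (1 + γ) * tvVec (margVec γ μ0 (2*k)) (piVec γ) := one_step γ hγ0 hγ _ (hprob _)
        _ ≤ (1 + γ) * (tvVec μ0 (piVec γ) * ((1 + γ)/2) ^ k) :=
            mul_le_mul_of_nonneg_left (heven k) (by linarith)
        _ = tvVec μ0 (piVec γ) * ((1 + γ)/2) ^ k * (1 + γ) := by ring
  · -- some pair of rows at distance 2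
    refine ⟨![0,1,0,0], 0, 1, ?_, ?_⟩
    · rw [isProbVec_iff]
      norm_num [Matrix.cons_val_two, Matrix.cons_val_three, Matrix.tail_cons, Matrix.head_cons]
    · rw [tvVec_eq]
      norm_num [Pmat]
      norm_num [abs_of_nonneg, Matrix.cons_val_two, Matrix.cons_val_three, Matrix.tail_cons, Matrix.head_cons]
  · -- Lipschitz
    intro μ ν hμ hν x
    rw [isProbVec_iff] at hμ hν
    obtain ⟨⟨m0, m1, m2, m3⟩, ms⟩ := hμ
    obtain ⟨⟨n0, n1, n2, n3⟩, ns⟩ := hν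
    have htv : 0 ≤ tvVec μ ν := tvVec_nonneg _ _
    have hrow : ∀ i : Fin 4, i ≠ 0 → tvVec (Pmat γ μ i) (Pmat γ ν i) = 0 := by
      intro i hi
      fin_cases i
      · exact absurd rfl hi
      · show tvVec (Pmat γ μ 1) (Pmat γ ν 1) = 0
        rw [tvVec_eq]; norm_num [Pmat]
      · show tvVec (Pmat γ μ 2) (Pmat γ ν 2) = 0
        rw [tvVec_eq]; norm_num [Pmat, Matrix.cons_val_two, Matrix.cons_val_three, Matrix.tail_cons, Matrix.head_cons]
      · show tvVec (Pmat γ μ 3) (Pmat γ ν 3) = 0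
        rw [tvVec_eq]; norm_num [Pmat, Matrix.cons_val_two, Matrix.cons_val_three, Matrix.tail_cons, Matrix.head_cons]
    by_cases hx : x = 0
    · subst hx
      rw [tvVec_eq, tvVec_eq]
      have pμ : Pmat γ μ 0 = ![0, γ * μ 0, 0.5 - γ * μ 0, 0.5] := rfl
      have pν : Pmat γ ν 0 = ![0, γ * ν 0, 0.5 - γ * ν 0, 0.5] := rfl
      rw [pμ, pν]
      simp only [Matrix.cons_val_zero, Matrix.cons_val_one, Matrix.head_cons,
        Matrix.cons_val_two, Matrix.tail_cons, Matrix.cons_val_three]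
      have h1 : |γ * μ 0 - γ * ν 0| = γ * |μ 0 - ν 0| := by
        rw [← mul_sub, abs_mul, abs_of_pos hγ0]
      have h2 : |0.5 - γ * μ 0 - (0.5 - γ * ν 0)| = γ * |μ 0 - ν 0| := by
        have hx2 : (0.5:ℝ) - γ * μ 0 - (0.5 - γ * ν 0) = -(γ * (μ 0 - ν 0)) := by ring
        rw [hx2, abs_neg, abs_mul, abs_of_pos hγ0]
      rw [h1, h2, sub_self, abs_zero, sub_self, abs_zero]
      have hkey : |μ 0 - ν 0| ≤ |μ 1 - ν 1| + |μ 2 - ν 2| + |μ 3 - ν 3| := by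
        have hx3 : μ 0 - ν 0 = -((μ 1 - ν 1) + (μ 2 - ν 2) + (μ 3 - ν 3)) := by linarith
        rw [hx3, abs_neg]
        calc |(μ 1 - ν 1) + (μ 2 - ν 2) + (μ 3 - ν 3)|
            ≤ |(μ 1 - ν 1) + (μ 2 - ν 2)| + |μ 3 - ν 3| := abs_add_le _ _
          _ ≤ |μ 1 - ν 1| + |μ 2 - ν 2| + |μ 3 - ν 3| := by
              linarith [abs_add_le (μ 1 - ν 1) (μ 2 - ν 2)]
      have q1 : γ * |μ 0 - ν 0| ≤ γ * (|μ 1 - ν 1| + |μ 2 - ν 2| + |μ 3 - ν 3|) :=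
        mul_le_mul_of_nonneg_left hkey hγ0.le
      nlinarith [abs_nonneg (μ 0 - ν 0)]
    · rw [hrow x hx]
      exact mul_nonneg hγ0.le htv
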